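/- An undirected graph G contains a clique of size k if and only if the incidence-based directed graph G' (with edge-vertices pointing to their endpoints and to a shared sink s, plus k+2 fully interconnected copies of a fixed pattern graph F that every original vertex points into) contains a weakly connected set S of size C(k,2) + 1 with out-neighborhood of size at most k that avoids inducing F. Specifically, the forward direction: if C is a k-clique in G, then S = {s} ∪ {v_e : e ⊆ C} is weakly connected, has size C(k,2)+1, and out-neighborhood exactly C of size k. -/

import Mathlib

/-- The directed graph `G'` of the F-free reduction: vertices are
`V(G) ⊕ edge-vertices ⊕ {s} ⊕ (k+2 copies of a pattern graph F)`. Each edge-vertex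
points to its two endpoints and to `s`, each original vertex points into every copy of
`F`, distinct copies of `F` are fully interconnected in both directions, and each copy
carries the edges of `F`. -/
def ffRel {V FV : Type*} (G : SimpleGraph V) (k : ℕ) (FE : FV → FV → Prop) :
    (V ⊕ (G.edgeSet ⊕ (Unit ⊕ Fin (k + 2) × FV))) →
    (V ⊕ (G.edgeSet ⊕ (Unit ⊕ Fin (k + 2) × FV))) → Prop
  | Sum.inr (Sum.inl e), Sum.inl a => a ∈ (e : Sym2 V)
  | Sum.inr (Sum.inl _), Sum.inr (Sum.inr (Sum.inl _)) => True
  | Sum.inl _, Sum.inr (Sum.inr (Sum.inr _)) => True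
  | Sum.inr (Sum.inr (Sum.inr (i, f))), Sum.inr (Sum.inr (Sum.inr (j, g))) =>
      i ≠ j ∨ (i = j ∧ FE f g)
  | _, _ => False

/-- The number of edges of `G` with both endpoints inside a clique `C` is
`(C.card).choose 2`. -/
lemma count_clique_edges {V : Type*} [Fintype V] [DecidableEq V] (G : SimpleGraph V)
    (C : Finset V) (hCclq : G.IsClique (↑C : Set V)) :
    {e : G.edgeSet | ∀ v ∈ (e : Sym2 V), v ∈ C}.ncard = C.card.choose 2 := by
  classical
  have h1 : (Subtype.val '' {e : G.edgeSet | ∀ v ∈ (e : Sym2 V), v ∈ C})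
      = Sym2.map (Subtype.val : (↑C : Set V) → V) ''
        (⊤ : SimpleGraph (↑C : Set V)).edgeSet := by
    ext p
    simp only [Set.mem_image, Set.mem_setOf_eq, SimpleGraph.edgeSet_top]
    constructor
    · rintro ⟨⟨q, hq⟩, hall, rfl⟩
      induction q using Sym2.ind with
      | _ a b =>
        have ha : a ∈ C := hall a (by simp)
        have hb : b ∈ C := hall b (by simp)
        have hne : a ≠ b := (G.mem_edgeSet.mp hq).ne
        refine ⟨s(⟨a, by simpa using ha⟩, ⟨b, by simpa using hb⟩), ?_, by simp⟩
        simp [Sym2.mk_isDiag_iff, Subtype.ext_iff, hne]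
    · rintro ⟨q, hq, rfl⟩
      induction q using Sym2.ind with
      | _ x y =>
        have hne : (x : V) ≠ (y : V) := by
          intro h
          exact hq (by simp [Sym2.mk_isDiag_iff, Subtype.ext_iff, h])
        have hadj : G.Adj (x : V) (y : V) := hCclq x.2 y.2 hne
        refine ⟨⟨s((x : V), (y : V)), hadj⟩, ?_, by simp⟩
        intro v hv
        rcases Sym2.mem_iff.mp hv with rfl | rfl
        · simp
        · simp
  calc {e : G.edgeSet | ∀ v ∈ (e : Sym2 V), v ∈ C}.ncard
      = (Subtype.val '' {e : G.edgeSet | ∀ v ∈ (e : Sym2 V), v ∈ C}).ncard :=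
        (Set.ncard_image_of_injective _ Subtype.val_injective).symm
    _ = ((⊤ : SimpleGraph (↑C : Set V)).edgeSet).ncard := by
        rw [h1, Set.ncard_image_of_injective _ (Sym2.map.injective Subtype.val_injective)]
    _ = (⊤ : SimpleGraph (↑C : Set V)).edgeFinset.card := by
        rw [← SimpleGraph.coe_edgeFinset, Set.ncard_coe_finset]
    _ = (Fintype.card (↑C : Set V)).choose 2 :=
        SimpleGraph.card_edgeFinset_top_eq_card_choose_two
    _ = C.card.choose 2 := by simp

/-- Forward direction of the hardness reduction: for a `k`-clique `C` of `G`, the set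
`S = {s} ∪ {v_e : e ⊆ C}` has size `C(k,2) + 1`, is weakly connected in `G'`, and its
out-neighborhood is exactly `C`, of size `k`. -/
theorem stmt_12 {V FV : Type*} [Fintype V] [DecidableEq V] (G : SimpleGraph V)
    (FE : FV → FV → Prop) (k : ℕ) (hk : 2 ≤ k)
    (C : Finset V) (hCcard : C.card = k) (hCclq : G.IsClique (↑C : Set V)) :
    (insert (Sum.inr (Sum.inr (Sum.inl ())) : V ⊕ (G.edgeSet ⊕ (Unit ⊕ Fin (k + 2) × FV)))
        {x | ∃ e : G.edgeSet, x = Sum.inr (Sum.inl e) ∧ ∀ v ∈ (e : Sym2 V), v ∈ C}).ncard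
      = k.choose 2 + 1 ∧
    {v | v ∉ insert (Sum.inr (Sum.inr (Sum.inl ())) :
          V ⊕ (G.edgeSet ⊕ (Unit ⊕ Fin (k + 2) × FV)))
        {x | ∃ e : G.edgeSet, x = Sum.inr (Sum.inl e) ∧ ∀ v ∈ (e : Sym2 V), v ∈ C} ∧
      ∃ s ∈ insert (Sum.inr (Sum.inr (Sum.inl ())) :
          V ⊕ (G.edgeSet ⊕ (Unit ⊕ Fin (k + 2) × FV)))
        {x | ∃ e : G.edgeSet, x = Sum.inr (Sum.inl e) ∧ ∀ v ∈ (e : Sym2 V), v ∈ C},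
      ffRel G k FE s v} = Sum.inl '' (↑C : Set V) ∧
    {v | v ∉ insert (Sum.inr (Sum.inr (Sum.inl ())) :
          V ⊕ (G.edgeSet ⊕ (Unit ⊕ Fin (k + 2) × FV)))
        {x | ∃ e : G.edgeSet, x = Sum.inr (Sum.inl e) ∧ ∀ v ∈ (e : Sym2 V), v ∈ C} ∧
      ∃ s ∈ insert (Sum.inr (Sum.inr (Sum.inl ())) :
          V ⊕ (G.edgeSet ⊕ (Unit ⊕ Fin (k + 2) × FV)))
        {x | ∃ e : G.edgeSet, x = Sum.inr (Sum.inl e) ∧ ∀ v ∈ (e : Sym2 V), v ∈ C},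
      ffRel G k FE s v}.ncard = k ∧
    ∀ a ∈ insert (Sum.inr (Sum.inr (Sum.inl ())) :
          V ⊕ (G.edgeSet ⊕ (Unit ⊕ Fin (k + 2) × FV)))
        {x | ∃ e : G.edgeSet, x = Sum.inr (Sum.inl e) ∧ ∀ v ∈ (e : Sym2 V), v ∈ C},
      ∀ b ∈ insert (Sum.inr (Sum.inr (Sum.inl ())) :
          V ⊕ (G.edgeSet ⊕ (Unit ⊕ Fin (k + 2) × FV)))
        {x | ∃ e : G.edgeSet, x = Sum.inr (Sum.inl e) ∧ ∀ v ∈ (e : Sym2 V), v ∈ C},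
      Relation.ReflTransGen (fun x y =>
        x ∈ insert (Sum.inr (Sum.inr (Sum.inl ())) :
              V ⊕ (G.edgeSet ⊕ (Unit ⊕ Fin (k + 2) × FV)))
            {x | ∃ e : G.edgeSet, x = Sum.inr (Sum.inl e) ∧ ∀ v ∈ (e : Sym2 V), v ∈ C} ∧
        y ∈ insert (Sum.inr (Sum.inr (Sum.inl ())) :
              V ⊕ (G.edgeSet ⊕ (Unit ⊕ Fin (k + 2) × FV)))
            {x | ∃ e : G.edgeSet, x = Sum.inr (Sum.inl e) ∧ ∀ v ∈ (e : Sym2 V), v ∈ C} ∧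
        (ffRel G k FE x y ∨ ffRel G k FE y x)) a b := by
  classical
  set t : V ⊕ (G.edgeSet ⊕ (Unit ⊕ Fin (k + 2) × FV)) := Sum.inr (Sum.inr (Sum.inl ()))
    with ht
  set T : Set (V ⊕ (G.edgeSet ⊕ (Unit ⊕ Fin (k + 2) × FV))) :=
    {x | ∃ e : G.edgeSet, x = Sum.inr (Sum.inl e) ∧ ∀ v ∈ (e : Sym2 V), v ∈ C} with hT
  have htT : t ∉ T := by
    rintro ⟨e, he, -⟩
    simp [ht] at he
  have hTim : T = (fun e : G.edgeSet =>
      (Sum.inr (Sum.inl e) : V ⊕ (G.edgeSet ⊕ (Unit ⊕ Fin (k + 2) × FV)))) ''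
      {e : G.edgeSet | ∀ v ∈ (e : Sym2 V), v ∈ C} := by
    ext x
    constructor
    · rintro ⟨e, rfl, h⟩; exact ⟨e, h, rfl⟩
    · rintro ⟨e, h, rfl⟩; exact ⟨e, rfl, h⟩
  have hTfin : T.Finite := by
    rw [hTim]; exact (Set.toFinite _).image _
  have hTcard : T.ncard = k.choose 2 := by
    rw [hTim, Set.ncard_image_of_injective _ (fun a b h => by simpa using h),
      count_clique_edges G C hCclq, hCcard]
  have hcard1 : (insert t T).ncard = k.choose 2 + 1 := by
    rw [Set.ncard_insert_of_notMem htT hTfin, hTcard]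
  -- out-neighborhood
  have hN : {v | v ∉ insert t T ∧ ∃ s ∈ insert t T, ffRel G k FE s v}
      = Sum.inl '' (↑C : Set V) := by
    ext v
    constructor
    · rintro ⟨hv, s, hs, hrel⟩
      rcases Set.mem_insert_iff.mp hs with rfl | ⟨e, rfl, he⟩
      · rcases v with a | e' | u | ⟨i, f⟩ <;> exact hrel.elim
      · rcases v with a | e' | u | ⟨i, f⟩
        · exact ⟨a, by simpa using he a hrel, rfl⟩
        · exact hrel.elim
        · cases u; exact absurd (Set.mem_insert _ _) hv
        · exact hrel.elim
    · rintro ⟨a, haC, rfl⟩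
      have haC' : a ∈ C := by simpa using haC
      obtain ⟨b, hb, hba⟩ := Finset.exists_mem_ne
        (by omega : 1 < C.card) a
      have hadj : G.Adj a b := (hCclq haC' hb (Ne.symm hba)).symm.symm
      refine ⟨?_, Sum.inr (Sum.inl ⟨s(a, b), hadj⟩), ?_, ?_⟩
      · intro h
        rcases Set.mem_insert_iff.mp h with h | ⟨e, h, -⟩
        · simp [ht] at h
        · simp at h
      · refine Set.mem_insert_iff.mpr (Or.inr ⟨⟨s(a, b), hadj⟩, rfl, ?_⟩)
        intro v hv
        rcases Sym2.mem_iff.mp hv with rfl | rfl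
        · exact haC'
        · exact hb
      · exact Sym2.mem_mk_left a b
  refine ⟨hcard1, hN, ?_, ?_⟩
  · rw [hN, Set.ncard_image_of_injective _ Sum.inl_injective, Set.ncard_coe_finset,
      hCcard]
  · -- weak connectivity
    set r : (V ⊕ (G.edgeSet ⊕ (Unit ⊕ Fin (k + 2) × FV))) →
        (V ⊕ (G.edgeSet ⊕ (Unit ⊕ Fin (k + 2) × FV))) → Prop :=
      fun x y => x ∈ insert t T ∧ y ∈ insert t T ∧
        (ffRel G k FE x y ∨ ffRel G k FE y x) with hr
    have hsymm : Symmetric r := by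
      rintro x y ⟨hx, hy, h⟩
      exact ⟨hy, hx, h.symm⟩
    have hstep : ∀ x ∈ insert t T, Relation.ReflTransGen r x t := by
      intro x hx
      rcases Set.mem_insert_iff.mp hx with rfl | ⟨e, rfl, he⟩
      · exact Relation.ReflTransGen.refl
      · exact Relation.ReflTransGen.single ⟨hx, Set.mem_insert _ _, Or.inl trivial⟩
    intro a ha b hb
    exact (hstep a ha).trans ((@Relation.ReflTransGen.stdSymm _ r ⟨fun _ _ h => hsymm h⟩).symm _ _ (hstep b hb))
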